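/- With K, S, D, T as above and E := S(2K*K - I) on ℂ^{A₀}, the 2|V₀|-column matrix L = [K* , SK*] satisfies the intertwining relation E L = L E_G, where E_G is the 2|V₀| × 2|V₀| block matrix with blocks [[0, -I],[2D - I, 2T]]. -/

import Mathlib

open Matrix

variable {V : Type*} [Fintype V] [DecidableEq V]

/-- The symmetric arc set of a simple graph: ordered pairs of adjacent vertices. -/
abbrev SimpleGraph.Arc (G : SimpleGraph V) [DecidableRel G.Adj] :=
  {p : V × V // G.Adj p.1 p.2}

/-- The weighted terminal-incidence matrix `K`, `K_{u,a} = 1/√(d̃ u)` if `t(a) = u`. -/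
noncomputable def Kmat (G : SimpleGraph V) [DecidableRel G.Adj] (dt : V → ℕ) :
    Matrix V G.Arc ℝ :=
  fun u a => if a.1.2 = u then 1 / Real.sqrt (dt u) else 0

/-- The arc-reversal matrix `S`, `(S ψ)(a) = ψ(ā)`. -/
def Smat (G : SimpleGraph V) [DecidableRel G.Adj] : Matrix G.Arc G.Arc ℝ :=
  fun a b => if b.1 = (a.1.2, a.1.1) then 1 else 0

/-- The diagonal matrix `D` with entries `d(u)/d̃(u)`. -/
noncomputable def Dmat (G : SimpleGraph V) [DecidableRel G.Adj] (dt : V → ℕ) :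
    Matrix V V ℝ :=
  Matrix.diagonal fun u => (G.degree u : ℝ) / (dt u)

/-- The Dirichlet random-walk matrix `T`, `T_{u,v} = 1/√(d̃(u) d̃(v))` for `u ~ v`. -/
noncomputable def Tmat (G : SimpleGraph V) [DecidableRel G.Adj] (dt : V → ℕ) :
    Matrix V V ℝ :=
  fun u v => if G.Adj u v then 1 / Real.sqrt ((dt u : ℝ) * (dt v : ℝ)) else 0


def arcRev (G : SimpleGraph V) [DecidableRel G.Adj] (a : G.Arc) : G.Arc :=
  ⟨(a.1.2, a.1.1), a.2.symm⟩

set_option linter.unusedSectionVars false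
set_option linter.unusedVariables false

lemma Smat_apply (G : SimpleGraph V) [DecidableRel G.Adj] (a b : G.Arc) :
    Smat G a b = if b = arcRev G a then 1 else 0 := by
  unfold Smat arcRev
  congr 1
  simp [Subtype.ext_iff]

lemma arcRev_rev (G : SimpleGraph V) [DecidableRel G.Adj] (a : G.Arc) :
    arcRev G (arcRev G a) = a := by
  unfold arcRev; ext <;> rfl

lemma SS (G : SimpleGraph V) [DecidableRel G.Adj] : Smat G * Smat G = 1 := by
  ext a b
  simp only [Matrix.mul_apply, Smat_apply]
  rw [Finset.sum_eq_single (arcRev G a)]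
  · simp [arcRev_rev, Matrix.one_apply, eq_comm]
  · intro c _ hc; simp [hc]
  · simp

lemma sum_arc (G : SimpleGraph V) [DecidableRel G.Adj] (F : V × V → ℝ) :
    ∑ a : G.Arc, F a.1 = ∑ x, ∑ y, if G.Adj x y then F (x, y) else 0 := by
  calc ∑ a : G.Arc, F a.1
      = ∑ p ∈ Finset.univ.filter (fun p : V × V => G.Adj p.1 p.2), F p :=
        (Finset.sum_subtype _ (by simp) F).symm
    _ = ∑ p : V × V, if G.Adj p.1 p.2 then F p else 0 := Finset.sum_filter _ _
    _ = ∑ x, ∑ y, if G.Adj x y then F (x, y) else 0 := Fintype.sum_prod_type _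

lemma KKt (G : SimpleGraph V) [DecidableRel G.Adj] (dt : V → ℕ) :
    Kmat G dt * (Kmat G dt)ᵀ = Dmat G dt := by
  ext u v
  simp only [Matrix.mul_apply, Matrix.transpose_apply, Kmat]
  rcases eq_or_ne u v with rfl | huv
  · simp only [Dmat, Matrix.diagonal_apply_eq]
    have h1 : ∀ a : G.Arc,
        (if a.1.2 = u then 1 / Real.sqrt (dt u) else 0) *
          (if a.1.2 = u then 1 / Real.sqrt (dt u) else 0)
        = (fun p : V × V => if p.2 = u then
            (1 / Real.sqrt (dt u)) * (1 / Real.sqrt (dt u)) else 0) a.1 := by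
      intro a; by_cases h : a.1.2 = u <;> simp [h]
    rw [Finset.sum_congr rfl (fun a _ => h1 a), sum_arc G (fun p : V × V => if p.2 = u then (1 / Real.sqrt (dt u)) * (1 / Real.sqrt (dt u)) else 0)]
    have h2 : ∀ x : V, (∑ y, if G.Adj x y then
        (if y = u then (1 / Real.sqrt (dt u)) * (1 / Real.sqrt (dt u)) else 0) else 0)
        = if G.Adj x u then (1 / Real.sqrt (dt u)) * (1 / Real.sqrt (dt u)) else 0 := by
      intro x
      rw [Finset.sum_eq_single u]
      · by_cases h : G.Adj x u <;> simp [h]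
      · intro y _ hy; simp [hy]
      · simp
    rw [Finset.sum_congr rfl (fun x _ => h2 x), ← Finset.sum_filter,
      Finset.sum_const]
    have hc : (Finset.univ.filter fun x => G.Adj x u) = G.neighborFinset u := by
      ext x; simp [SimpleGraph.adj_comm]
    rw [hc, SimpleGraph.card_neighborFinset_eq_degree, nsmul_eq_mul,
      div_mul_div_comm, one_mul, Real.mul_self_sqrt (by positivity), mul_one_div]
  · rw [Finset.sum_eq_zero, Dmat, Matrix.diagonal_apply_ne _ huv]
    intro a _
    rcases eq_or_ne a.1.2 u with h | h
    · simp [h, huv]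
    · simp [h]

lemma KSKt (G : SimpleGraph V) [DecidableRel G.Adj] (dt : V → ℕ) :
    Kmat G dt * (Smat G * (Kmat G dt)ᵀ) = Tmat G dt := by
  ext u v
  have hSK : ∀ a : G.Arc, (Smat G * (Kmat G dt)ᵀ) a v = Kmat G dt v (arcRev G a) := by
    intro a
    simp only [Matrix.mul_apply, Smat_apply, Matrix.transpose_apply]
    rw [Finset.sum_eq_single (arcRev G a)]
    · simp
    · intro c _ hc; simp [hc]
    · simp
  simp only [Matrix.mul_apply, hSK]
  have h1 : ∀ a : G.Arc, Kmat G dt u a * Kmat G dt v (arcRev G a)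
      = (fun p : V × V => (if p.2 = u then 1 / Real.sqrt (dt u) else 0) *
          (if p.1 = v then 1 / Real.sqrt (dt v) else 0)) a.1 := by
    intro a; rfl
  rw [Finset.sum_congr rfl (fun a _ => h1 a), sum_arc G (fun p : V × V => (if p.2 = u then 1 / Real.sqrt (dt u) else 0) * (if p.1 = v then 1 / Real.sqrt (dt v) else 0))]
  have h2 : ∀ x : V, (∑ y, if G.Adj x y then
      (if y = u then 1 / Real.sqrt (dt u) else 0) *
        (if x = v then 1 / Real.sqrt (dt v) else 0) else 0)
      = if x = v ∧ G.Adj x u then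
          (1 / Real.sqrt (dt u)) * (1 / Real.sqrt (dt v)) else 0 := by
    intro x
    rw [Finset.sum_eq_single u]
    · by_cases h : G.Adj x u <;> by_cases h' : x = v <;> simp [h, h', and_comm]
    · intro y _ hy; simp [hy]
    · simp
  rw [Finset.sum_congr rfl (fun x _ => h2 x), Finset.sum_eq_single v]
  · by_cases h : G.Adj v u
    · rw [if_pos ⟨rfl, h⟩, Tmat, if_pos (h.symm), Real.sqrt_mul (by positivity),
        one_div, one_div, one_div, mul_inv]
    · rw [if_neg (by simp [h]), Tmat, if_neg (fun hc => h hc.symm)]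
  · intro x _ hx; simp [hx]
  · simp

/-- The Grover-type evolution `E = S(2KᵀK − 1)` intertwines with the block matrix
`E_G = [[0, −1],[2D − 1, 2T]]` through `L = [Kᵀ, SKᵀ]`: `E L = L E_G`. -/
theorem grover_intertwining (G : SimpleGraph V) [DecidableRel G.Adj] (dt : V → ℕ)
    (hconn : G.Connected) (hle : ∀ u, G.degree u ≤ dt u) (hbd : ∃ u, G.degree u < dt u) :
    (Smat G * ((2 : ℝ) • ((Kmat G dt).transpose * Kmat G dt) - 1)) *
        Matrix.fromCols (Kmat G dt).transpose (Smat G * (Kmat G dt).transpose)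
      = Matrix.fromCols (Kmat G dt).transpose (Smat G * (Kmat G dt).transpose) *
          Matrix.fromBlocks 0 (-1) ((2 : ℝ) • Dmat G dt - 1) ((2 : ℝ) • Tmat G dt) := by
  set K := Kmat G dt
  set S := Smat G
  rw [Matrix.mul_fromCols]
  erw [Matrix.fromCols_mul_fromBlocks]
  rw [Matrix.fromCols_ext_iff]
  constructor
  · rw [Matrix.mul_zero, zero_add, Matrix.mul_assoc S, Matrix.sub_mul, Matrix.one_mul,
      Matrix.smul_mul, Matrix.mul_sub, Matrix.mul_smul,
      Matrix.mul_sub (S * Kᵀ), Matrix.mul_one, Matrix.mul_smul]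
    congr 2
    simp only [Matrix.mul_assoc]
    rw [KKt]
  · rw [Matrix.mul_neg, Matrix.mul_one, Matrix.mul_assoc S, Matrix.sub_mul, Matrix.one_mul,
      Matrix.smul_mul, Matrix.mul_sub, Matrix.mul_smul,
      ← Matrix.mul_assoc S S, SS, Matrix.one_mul, sub_eq_neg_add]
    simp only [Matrix.mul_smul]
    congr 2
    simp only [Matrix.mul_assoc]
    rw [KSKt]
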